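/- Let p satisfy log n/n ≤ p ≤ 2 log n/n and let γ:ℕ→(0,1) be any function with γ(n)→0. Then with probability tending to 1 as n→∞, G ~ G(n,p) satisfies the following. For every bipartite (not necessarily induced) subgraph B = (S ∪ W, E') of G with S and W disjoint, |S| ≤ n/log^{0.9} n, (1−γ(n))·n/log log n ≤ |W| ≤ (1+γ(n))·n/log log n, and d_B(v) ≥ log n/(log log n)² for every v ∈ S, there exists a ⌈log^{0.2} n⌉-matching from S to W in B, i.e., a subgraph M of B in which every vertex of S has exactly ⌈log^{0.2} n⌉ neighbors in W and every vertex of W has degree at most 1. -/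

import Mathlib

open MeasureTheory Filter
open scoped ENNReal

/-- The potential edges of a `k`-uniform hypergraph on vertex set `Fin n`. -/
abbrev HEdge (n k : ℕ) := {e : Finset (Fin n) // e.card = k}

/-- A sample of the colored random hypergraph: each potential edge is either absent
(`none`) or present with a color from `Fin c`. -/
abbrev CSample (n k c : ℕ) := HEdge n k → Option (Fin c)

/-- A sample of the uncolored random hypergraph. -/
abbrev USample (n k : ℕ) := HEdge n k → Bool

/-- Every subset of the (finite) status space of an edge is measurable. -/
instance optionFinMeasurableSpace (c : ℕ) : MeasurableSpace (Option (Fin c)) := ⊤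

/-- The distribution of the status of a single edge: absent with probability `1 - p`,
present with a uniformly random color with probability `p`. -/
noncomputable def edgePMF (c : ℕ) (p : ℝ≥0∞) : PMF (Option (Fin c)) :=
  if h : c = 0 then PMF.pure none
  else
    haveI : Nonempty (Fin c) := ⟨⟨0, Nat.pos_of_ne_zero h⟩⟩
    (PMF.bernoulli (min p 1).toNNReal
      (by simpa using ENNReal.toNNReal_mono ENNReal.one_ne_top (min_le_right p 1))).bind fun b =>
      if b then (PMF.uniformOfFintype (Fin c)).map some else PMF.pure none

/-- The law of the randomly edge-colored random `k`-uniform hypergraph `H^k_c(n,p)`: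
the edges are independent and each is present with probability `p`, receiving a
uniformly random color from `[c]`. -/
noncomputable def cHyper (n k c : ℕ) (p : ℝ≥0∞) : Measure (CSample n k c) :=
  Measure.pi fun _ => (edgePMF c p).toMeasure

/-- The law of the uncolored binomial random `k`-uniform hypergraph `H^k(n,p)`. -/
noncomputable def uHyper (n k : ℕ) (p : ℝ≥0∞) : Measure (USample n k) :=
  Measure.pi fun _ => (PMF.bernoulli (min p 1).toNNReal
    (by simpa using ENNReal.toNNReal_mono ENNReal.one_ne_top (min_le_right p 1))).toMeasure

/-- The status of the pair `{v, w}` in a colored graph sample (k = 2):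
`none` if absent (or if `v = w`), `some x` if present with color `x`. -/
def col {n c : ℕ} (ω : CSample n 2 c) (v w : Fin n) : Option (Fin c) :=
  if h : v = w then none else ω ⟨{v, w}, Finset.card_pair h⟩

/-- Adjacency in an uncolored graph sample (k = 2). -/
def uadj {n : ℕ} (ω : USample n 2) (v w : Fin n) : Prop :=
  if h : v = w then False else ω ⟨{v, w}, Finset.card_pair h⟩ = true



noncomputable section StarMatchingProof
set_option maxHeartbeats 1000000

open Finset


lemma pow_self_le_exp_mul_factorial : ∀ a : ℕ, (a:ℝ)^a ≤ Real.exp 1 ^ a * a.factorial := by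
  intro a
  induction a with
  | zero => simp
  | succ a ih =>
    have h1 : ((a:ℝ)+1)^a ≤ Real.exp 1 * (a:ℝ)^a := by
      rcases Nat.eq_zero_or_pos a with h | h
      · subst h; simpa using (Real.exp_pos 1).le.trans (by nlinarith [Real.exp_one_gt_d9])
      · have ha : (0:ℝ) < a := by exact_mod_cast h
        have heq : ((a:ℝ)+1)^a = (1 + 1/a)^a * (a:ℝ)^a := by
          rw [← mul_pow]; congr 1; field_simp
        rw [heq]
        have h2 : (1 + 1/(a:ℝ))^a ≤ Real.exp (1/a) ^ a := by
          apply pow_le_pow_left₀ (by positivity)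
          exact Real.add_one_le_exp _ |>.trans_eq' (by ring_nf)
        calc (1 + 1/(a:ℝ))^a * (a:ℝ)^a ≤ Real.exp (1/a) ^ a * (a:ℝ)^a := by
              apply mul_le_mul_of_nonneg_right h2 (by positivity)
          _ = Real.exp (a * (1/a)) * (a:ℝ)^a := by rw [← Real.exp_nat_mul]
          _ = Real.exp 1 * (a:ℝ)^a := by rw [mul_one_div, div_self ha.ne']
    have : ((a+1:ℕ):ℝ)^(a+1) = ((a:ℝ)+1) * ((a:ℝ)+1)^a := by push_cast; ring
    rw [this]
    calc ((a:ℝ)+1) * ((a:ℝ)+1)^a ≤ ((a:ℝ)+1) * (Real.exp 1 * (a:ℝ)^a) := by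
          apply mul_le_mul_of_nonneg_left h1 (by positivity)
      _ ≤ ((a:ℝ)+1) * (Real.exp 1 * (Real.exp 1 ^ a * a.factorial)) := by
          apply mul_le_mul_of_nonneg_left (mul_le_mul_of_nonneg_left ih (Real.exp_pos 1).le) (by positivity)
      _ = Real.exp 1 ^ (a+1) * ((a+1) * a.factorial) := by ring
      _ = Real.exp 1 ^ (a+1) * (a+1).factorial := by rw [Nat.factorial_succ]; push_cast; ring

lemma choose_le_epow (m a : ℕ) : (m.choose a : ℝ) ≤ (Real.exp 1 * m / a)^a := by
  rcases Nat.eq_zero_or_pos a with h | h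
  · subst h; simp
  have ha : (0:ℝ) < a := by exact_mod_cast h
  have hfac : (0:ℝ) < a.factorial := by exact_mod_cast a.factorial_pos
  have h1 : (m.choose a : ℝ) * a.factorial ≤ (m:ℝ)^a := by
    have := Nat.descFactorial_le_pow m a
    rw [Nat.descFactorial_eq_factorial_mul_choose] at this
    exact_mod_cast (by rw [mul_comm]; exact_mod_cast this : (m.choose a * a.factorial : ℕ) ≤ m^a)
  have h2 : (a:ℝ)^a ≤ Real.exp 1 ^ a * a.factorial := pow_self_le_exp_mul_factorial a
  have key : (m.choose a : ℝ) ≤ (m:ℝ)^a / a.factorial := by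
    rw [le_div_iff₀ hfac]; exact h1
  refine key.trans ?_
  rw [div_pow, mul_pow, div_le_div_iff₀ hfac (by positivity)]
  calc (m:ℝ)^a * (a:ℝ)^a ≤ (m:ℝ)^a * (Real.exp 1 ^ a * a.factorial) := by
        apply mul_le_mul_of_nonneg_left h2 (by positivity)
    _ = Real.exp 1 ^ a * (m:ℝ)^a * a.factorial := by ring

noncomputable def kk (n : ℕ) : ℕ := ⌈(Real.log n)^(0.2:ℝ)⌉₊
noncomputable def Dd (n : ℕ) : ℝ := Real.log n / (Real.log (Real.log n))^2
noncomputable def aa (n u : ℕ) : ℕ := ⌈Dd n * u / (2*(kk n))⌉₊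
noncomputable def Umax (n : ℕ) : ℝ := 2*(kk n)*n/(Real.log n)^(0.9:ℝ)

def Big (n : ℕ) : Prop :=
  2 ≤ Real.log n ∧ 14 ≤ Real.log (Real.log n) ∧
  Real.log (4*Real.exp 1*(Real.log (Real.log n))^2) ≤ 0.1 * Real.log (Real.log n) ∧
  32*(Real.log (Real.log n))^2 ≤ (Real.log n)^(0.8:ℝ)


lemma geom_aux (x : ℝ) (h0 : 0 ≤ x) (h2 : 2*x ≤ 1) (N : ℕ) :
    (∑ u ∈ Finset.range N, if u = 0 then (0:ℝ) else x^u) ≤ 2*x := by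
  rcases Nat.eq_zero_or_pos N with rfl | hN
  · simp; positivity
  have key : ∀ M : ℕ, 1 ≤ M → (∑ u ∈ Finset.range M, if u = 0 then (0:ℝ) else x^u) ≤ 2*x - 2*x^M := by
    intro M hM
    induction M with
    | zero => omega
    | succ M ih =>
      rcases Nat.eq_zero_or_pos M with rfl | hM1
      · simp
      have hstep := ih hM1
      rw [Finset.sum_range_succ, if_neg (Nat.pos_iff_ne_zero.1 hM1)]
      have hx : 2*x^(M+1) ≤ x^M := by
        have : x^(M+1) = x^M * x := pow_succ x M
        nlinarith [pow_nonneg h0 M]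
      linarith
  have := key N hN
  nlinarith [pow_nonneg h0 N]

lemma kk_ge_one {n : ℕ} (hL1 : 1 ≤ Real.log n) : 1 ≤ kk n := by
  rw [kk]
  refine Nat.one_le_iff_ne_zero.2 ?_
  simp only [ne_eq, Nat.ceil_eq_zero, not_le]
  positivity

lemma kk_le {n : ℕ} (hL1 : 1 ≤ Real.log n) : (kk n : ℝ) ≤ 2*(Real.log n)^(0.2:ℝ) := by
  have h1 : (1:ℝ) ≤ (Real.log n)^(0.2:ℝ) := Real.one_le_rpow hL1 (by norm_num)
  have := Nat.ceil_lt_add_one (show (0:ℝ) ≤ (Real.log n)^(0.2:ℝ) by positivity)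
  rw [kk]
  push_cast
  linarith


lemma choose_two_le (u : ℕ) : (u.choose 2 : ℝ) ≤ (u:ℝ)^2/2 := by
  rw [Nat.choose_two_right]
  have h2 : ((u * (u-1) / 2 : ℕ) : ℝ) * 2 ≤ (u:ℝ)^2 := by
    have : (u * (u-1) / 2 : ℕ) * 2 ≤ u^2 := by
      have := Nat.div_mul_le_self (u * (u-1)) 2
      calc u * (u-1)/2 * 2 ≤ u * (u-1) := this
        _ ≤ u * u := Nat.mul_le_mul_left _ (Nat.sub_le _ _)
        _ = u^2 := (sq u).symm
    exact_mod_cast this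
  linarith


lemma core (n u a : ℕ) (L LL K pp : ℝ)
    (hL1 : 1 ≤ L) (hLL : LL = Real.log L) (hLL14 : 14 ≤ LL)
    (hb3 : Real.log (4*Real.exp 1*LL^2) ≤ 0.1*LL)
    (hb4 : 32*LL^2 ≤ L^(0.8:ℝ))
    (hK1 : 1 ≤ K) (hK2 : K ≤ 2*L^(0.2:ℝ))
    (hn : 0 < (n:ℝ))
    (hu : 1 ≤ u) (hua : (u:ℝ) ≤ 2*K*n/L^(0.9:ℝ))
    (ha : (L/LL^2)*u/(2*K) ≤ (a:ℝ))
    (hp0 : 0 ≤ pp) (hp2 : pp ≤ 2*L/n) :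
    (n.choose u:ℝ) * ((Nat.choose (u.choose 2) a:ℝ) * pp^a) ≤ (1/L)^u := by
  have hL0 : (0:ℝ) < L := by linarith
  have hLL0 : (0:ℝ) < LL := by linarith
  have hK0 : (0:ℝ) < K := by linarith
  have hu0 : (0:ℝ) < u := by exact_mod_cast hu
  have hD0 : (0:ℝ) < L/LL^2 := by positivity
  have ha0 : (0:ℝ) < a := lt_of_lt_of_le (by positivity) ha
  have ha1 : 1 ≤ a := by exact_mod_cast ha0
  -- the exponent v
  set v : ℝ := Real.log ((n:ℝ)/u) with hv
  -- v ≥ 0.6 LL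
  have hnu : L^(0.7:ℝ)/4 ≤ (n:ℝ)/u := by
    have h1 : (u:ℝ) * L^(0.9:ℝ) ≤ 2*K*n := (le_div_iff₀ (by positivity)).mp hua
    have h2 : L^(0.9:ℝ) = L^(0.2:ℝ) * L^(0.7:ℝ) := by
      rw [← Real.rpow_add hL0]; norm_num
    rw [div_le_div_iff₀ (by norm_num) hu0]
    have h3 : 2*K ≤ 4*L^(0.2:ℝ) := by linarith
    have h4 : (u:ℝ) * L^(0.9:ℝ) ≤ 4*L^(0.2:ℝ)*n := by
      calc (u:ℝ) * L^(0.9:ℝ) ≤ 2*K*n := h1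
        _ ≤ 4*L^(0.2:ℝ)*n := by nlinarith
    have h5 : (0:ℝ) < L^(0.2:ℝ) := by positivity
    nlinarith [h4, h2, mul_pos hu0 (Real.rpow_pos_of_pos hL0 0.7)]
  have hlog4 : Real.log 4 ≤ 1.4 := by
    have : Real.log 4 = 2 * Real.log 2 := by
      rw [show (4:ℝ) = 2^2 by norm_num, Real.log_pow]; push_cast; ring
    rw [this]; nlinarith [Real.log_two_lt_d9]
  have hv6 : 0.6*LL ≤ v := by
    have h1 : Real.log (L^(0.7:ℝ)/4) ≤ v := by
      apply Real.log_le_log (by positivity) hnu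
    have h2 : Real.log (L^(0.7:ℝ)/4) = 0.7*LL - Real.log 4 := by
      rw [Real.log_div (by positivity) (by norm_num), Real.log_rpow hL0, hLL]
    rw [h2] at h1
    have : Real.log 4 ≤ 0.1*LL := by linarith
    linarith
  have hv0 : (0:ℝ) < v := by linarith
  -- trivial case pp = 0
  rcases eq_or_lt_of_le hp0 with hpz | hppos
  · rw [← hpz, zero_pow (by omega : a ≠ 0)]
    simp only [mul_zero]
    positivity
  -- main case
  set m := u.choose 2 with hm
  set E : ℝ := Real.exp 1 with hE
  have hE0 : (0:ℝ) < E := Real.exp_pos 1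
  set ρ : ℝ := E * m * pp / a with hρ
  set ρb : ℝ := 2*E*K*LL^2*u/n with hρb
  have hρ0 : 0 ≤ ρ := by positivity
  have hρbpos : 0 < ρb := by positivity
  have hmu : (m:ℝ) ≤ (u:ℝ)^2/2 := choose_two_le u
  have hrho_le : ρ ≤ ρb := by
    rw [hρ, hρb, div_le_div_iff₀ ha0 hn]
    have h1 : E * m * pp * n ≤ E * u^2 * L := by
      have hmp : (m:ℝ)*(pp*n) ≤ ((u:ℝ)^2/2)*(2*L) := by
        have hppn : pp*(n:ℝ) ≤ 2*L := (le_div_iff₀ hn).mp hp2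
        apply mul_le_mul hmu hppn (by positivity) (by positivity)
      nlinarith
    have heq : 2*E*K*LL^2*(u:ℝ)*((L/LL^2)*u/(2*K)) = E * u^2 * L := by
      field_simp
    have h2 : E * (u:ℝ)^2 * L ≤ 2*E*K*LL^2*u*a := by
      rw [← heq]
      apply mul_le_mul_of_nonneg_left ha (by positivity)
    linarith
  have hc : Real.log (2*E*K*LL^2) ≤ 0.3*LL := by
    have h1 : 2*E*K*LL^2 ≤ (4*E*LL^2) * L^(0.2:ℝ) := by
      calc 2*E*K*LL^2 = (2*E*LL^2)*K := by ring
        _ ≤ (2*E*LL^2)*(2*L^(0.2:ℝ)) := mul_le_mul_of_nonneg_left hK2 (by positivity)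
        _ = (4*E*LL^2) * L^(0.2:ℝ) := by ring
    have h3 : Real.log ((4*E*LL^2) * L^(0.2:ℝ)) = Real.log (4*E*LL^2) + 0.2*LL := by
      rw [Real.log_mul (by positivity) (by positivity), Real.log_rpow hL0, ← hLL]
    calc Real.log (2*E*K*LL^2) ≤ Real.log ((4*E*LL^2) * L^(0.2:ℝ)) :=
          Real.log_le_log (by positivity) h1
      _ = Real.log (4*E*LL^2) + 0.2*LL := h3
      _ ≤ 0.1*LL + 0.2*LL := by linarith [hb3]
      _ = 0.3*LL := by ring
  have hlogρb : Real.log ρb ≤ 0.3*LL - v := by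
    have : ρb = (2*E*K*LL^2) * ((u:ℝ)/n) := by rw [hρb]; ring
    rw [this, Real.log_mul (by positivity) (by positivity)]
    have hinv : (u:ℝ)/n = ((n:ℝ)/u)⁻¹ := by rw [inv_div]
    rw [hinv, Real.log_inv, ← hv]
    linarith
  have ha8 : 8*(u:ℝ) ≤ a := by
    have h08 : L^(0.8:ℝ) * L^(0.2:ℝ) = L := by
      rw [← Real.rpow_add hL0]; norm_num
    have hL02 : (0:ℝ) < L^(0.2:ℝ) := by positivity
    have hd : (8:ℝ) ≤ (L/LL^2)/(2*K) := by
      rw [le_div_iff₀ (by positivity), le_div_iff₀ (by positivity)]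
      have hre : 8*(2*K)*LL^2 = (16*LL^2)*K := by ring
      rw [hre]
      calc (16*LL^2)*K ≤ (16*LL^2)*(2*L^(0.2:ℝ)) := mul_le_mul_of_nonneg_left hK2 (by positivity)
        _ = 32*LL^2*L^(0.2:ℝ) := by ring
        _ ≤ L^(0.8:ℝ)*L^(0.2:ℝ) := mul_le_mul_of_nonneg_right hb4 hL02.le
        _ = L := h08
    calc 8*(u:ℝ) ≤ ((L/LL^2)/(2*K))*u := mul_le_mul_of_nonneg_right hd hu0.le
      _ = (L/LL^2)*u/(2*K) := by ring
      _ ≤ a := ha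
  have hfin : (u:ℝ)*(1+v) + (a:ℝ)*(0.3*LL - v) ≤ -((u:ℝ)*LL) := by
    have h5 : 0.3*LL - v ≤ -(0.5*v) := by linarith
    have h6 : (a:ℝ)*(0.3*LL - v) ≤ (a:ℝ)*(-(0.5*v)) := mul_le_mul_of_nonneg_left h5 ha0.le
    have h7 : (u:ℝ)*(1+v) + (u:ℝ)*LL ≤ 0.5*((a:ℝ)*v) := by
      have hva : 8.4 ≤ v := by linarith
      nlinarith [mul_le_mul_of_nonneg_right ha8 hv0.le, mul_le_mul_of_nonneg_left hv6 hu0.le]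
    nlinarith
  -- assemble
  have key1 : (n.choose u:ℝ) ≤ (E * n/u)^u := choose_le_epow n u
  have key2 : (m.choose a:ℝ) ≤ (E * m/a)^a := choose_le_epow m a
  have hlhs : (n.choose u:ℝ) * ((Nat.choose m a:ℝ) * pp^a) ≤ (E*n/u)^u * ρ^a := by
    have h1 : (Nat.choose m a:ℝ) * pp^a ≤ (E*m/a)^a * pp^a :=
      mul_le_mul_of_nonneg_right key2 (by positivity)
    have h2 : (E*m/a)^a * pp^a = ρ^a := by
      rw [← mul_pow, hρ]; congr 1; field_simp
    calc (n.choose u:ℝ) * ((Nat.choose m a:ℝ) * pp^a)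
        ≤ (E*n/u)^u * ((Nat.choose m a:ℝ) * pp^a) := by
          apply mul_le_mul_of_nonneg_right key1 (by positivity)
      _ ≤ (E*n/u)^u * ((E*m/a)^a * pp^a) := by
          apply mul_le_mul_of_nonneg_left h1 (by positivity)
      _ = (E*n/u)^u * ρ^a := by rw [h2]
  have hEnu : (E*(n:ℝ)/u)^u = Real.exp ((u:ℝ)*(1+v)) := by
    have hx : (0:ℝ) < E*n/u := by positivity
    have hlx : Real.log (E*(n:ℝ)/u) = 1 + v := by
      rw [mul_div_assoc, Real.log_mul (ne_of_gt hE0) (by positivity), hE, Real.log_exp, hv]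
    rw [← Real.exp_log hx, hlx, ← Real.exp_nat_mul]
  have hρa : ρ^a ≤ Real.exp ((a:ℝ)*(0.3*LL - v)) := by
    calc ρ^a ≤ ρb^a := pow_le_pow_left₀ hρ0 hrho_le a
      _ = Real.exp ((a:ℝ)*Real.log ρb) := by
          rw [← Real.rpow_natCast ρb a, Real.rpow_def_of_pos hρbpos, mul_comm]
      _ ≤ Real.exp ((a:ℝ)*(0.3*LL - v)) := by
          apply Real.exp_le_exp.2
          apply mul_le_mul_of_nonneg_left hlogρb ha0.le
  calc (n.choose u:ℝ) * ((Nat.choose m a:ℝ) * pp^a) ≤ (E*n/u)^u * ρ^a := hlhs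
    _ ≤ Real.exp ((u:ℝ)*(1+v)) * Real.exp ((a:ℝ)*(0.3*LL - v)) := by
        rw [hEnu]
        apply mul_le_mul_of_nonneg_left hρa (by positivity)
    _ = Real.exp ((u:ℝ)*(1+v) + (a:ℝ)*(0.3*LL - v)) := by rw [← Real.exp_add]
    _ ≤ Real.exp (-((u:ℝ)*LL)) := Real.exp_le_exp.2 hfin
    _ = (1/L)^u := by
        rw [show -((u:ℝ)*LL) = (u:ℝ)*(-LL) by ring, Real.exp_nat_mul, hLL, Real.exp_neg, Real.exp_log hL0]
        norm_num

lemma big_eventually : ∀ᶠ n : ℕ in atTop, Big n := by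
  have hL : Tendsto (fun n : ℕ => Real.log n) atTop atTop :=
    Real.tendsto_log_atTop.comp tendsto_natCast_atTop_atTop
  have hLL : Tendsto (fun n : ℕ => Real.log (Real.log n)) atTop atTop :=
    Real.tendsto_log_atTop.comp hL
  have b1 : ∀ᶠ n : ℕ in atTop, 2 ≤ Real.log n := hL.eventually_ge_atTop 2
  have b2 : ∀ᶠ n : ℕ in atTop, 14 ≤ Real.log (Real.log n) := hLL.eventually_ge_atTop 14
  have ev3 : ∀ᶠ x : ℝ in atTop, Real.log (4*Real.exp 1*x^2) ≤ 0.1*x := by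
    have h := (Real.isLittleO_log_id_atTop.bound (c := 1/30) (by norm_num))
    filter_upwards [h, eventually_ge_atTop (4*Real.exp 1), eventually_ge_atTop 1] with x hx hx4 hx1
    have hx0 : (0:ℝ) < x := by linarith
    have h1 : 4*Real.exp 1*x^2 ≤ x^3 := by nlinarith [sq_nonneg x, Real.exp_pos 1]
    have h2 : Real.log (4*Real.exp 1*x^2) ≤ Real.log (x^3) :=
      Real.log_le_log (by positivity) h1
    rw [Real.log_pow] at h2
    have h3 : Real.log x ≤ x/30 := by
      have := hx
      simp only [Real.norm_eq_abs, id_eq, abs_of_nonneg (Real.log_nonneg hx1),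
        abs_of_nonneg hx0.le] at this
      linarith
    push_cast at h2
    linarith
  have b3 : ∀ᶠ n : ℕ in atTop,
      Real.log (4*Real.exp 1*(Real.log (Real.log n))^2) ≤ 0.1 * Real.log (Real.log n) :=
    hLL.eventually ev3
  have ev4 : ∀ᶠ x : ℝ in atTop, 32*(Real.log x)^2 ≤ x^(0.8:ℝ) := by
    have h := (isLittleO_log_rpow_rpow_atTop (2:ℝ) (show (0:ℝ) < 0.8 by norm_num)).bound
      (c := 1/32) (by norm_num)
    filter_upwards [h, eventually_ge_atTop 1] with x hx hx1
    have hlog0 : 0 ≤ Real.log x := Real.log_nonneg hx1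
    have hr2 : Real.log x ^ (2:ℝ) = (Real.log x)^2 := by
      rw [show (2:ℝ) = ((2:ℕ):ℝ) by norm_num, Real.rpow_natCast]
    rw [Real.norm_eq_abs, Real.norm_eq_abs, hr2, abs_of_nonneg (by positivity),
      abs_of_nonneg (by positivity : (0:ℝ) ≤ x^(0.8:ℝ))] at hx
    linarith
  have b4 : ∀ᶠ n : ℕ in atTop, 32*(Real.log (Real.log n))^2 ≤ (Real.log n)^(0.8:ℝ) :=
    hL.eventually ev4
  filter_upwards [b1, b2, b3, b4] with n h1 h2 h3 h4
  exact ⟨h1, h2, h3, h4⟩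

instance usampleMSC (n k : ℕ) : MeasurableSingletonClass (USample n k) := by
  constructor
  intro ω
  have : ({ω} : Set (USample n k)) = Set.pi Set.univ (fun e => {ω e}) := by
    ext x; simp [Set.eq_univ_iff_forall, funext_iff, Set.mem_pi]
  rw [this]
  exact MeasurableSet.pi (Set.countable_univ) (fun e _ => trivial)

lemma usample_measurable {n k : ℕ} (s : Set (USample n k)) : MeasurableSet s :=
  (Set.toFinite s).measurableSet


def edgeTrue {n : ℕ} (ω : USample n 2) (e : Finset (Fin n)) : Bool :=
  if h : e.card = 2 then ω ⟨e, h⟩ else false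

def X {n : ℕ} (ω : USample n 2) (U : Finset (Fin n)) : ℕ :=
  ((U.powersetCard 2).filter (fun e => edgeTrue ω e = true)).card

def Qev (n : ℕ) (ω : USample n 2) : Prop :=
  ∀ U : Finset (Fin n), U.Nonempty → (U.card:ℝ) ≤ Umax n → X ω U < aa n U.card

lemma uadj_ne {n : ℕ} {ω : USample n 2} {v w : Fin n} (h : uadj ω v w) : v ≠ w := by
  intro e; rw [uadj, dif_pos e] at h; exact h

lemma uadj_edgeTrue {n : ℕ} {ω : USample n 2} {v w : Fin n} (h : uadj ω v w) :
    edgeTrue ω {v, w} = true := by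
  have hne := uadj_ne h
  rw [uadj, dif_neg hne] at h
  rw [edgeTrue, dif_pos (Finset.card_pair hne)]
  exact h

lemma det {n : ℕ} (hL1 : 1 ≤ Real.log n) (ω : USample n 2) (hQ : Qev n ω)
    (S W : Finset (Fin n)) (hSW : Disjoint S W)
    (hS : (S.card:ℝ) ≤ (n:ℝ) / (Real.log n)^(0.9:ℝ))
    (E' : Finset (Fin n × Fin n))
    (hE' : ∀ e ∈ E', e.1 ∈ S ∧ e.2 ∈ W ∧ uadj ω e.1 e.2)
    (hdeg : ∀ s ∈ S, Real.log n / (Real.log (Real.log n))^2 ≤ ((E'.filter fun e => e.1 = s).card : ℝ)) :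
    ∃ M ⊆ E', (∀ s ∈ S, (M.filter fun e => e.1 = s).card = ⌈(Real.log (n:ℕ))^(0.2:ℝ)⌉₊) ∧
      (∀ w : Fin n, (M.filter fun e => e.2 = w).card ≤ 1) := by
  classical
  have hkk1 : 1 ≤ kk n := by
    rw [kk]
    exact Nat.one_le_iff_ne_zero.2 (by
      simp only [ne_eq, Nat.ceil_eq_zero, not_le]
      positivity)
  have hDd0 : 0 ≤ Dd n := by
    rw [Dd]; positivity
  set nbr : Fin n → Finset (Fin n) := fun s => (E'.filter (fun e => e.1 = s)).image Prod.snd with hnbr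
  -- Hall-type expansion from Qev
  have hHall : ∀ T ⊆ S, kk n * T.card ≤ (T.biUnion nbr).card := by
    intro T hT
    rcases T.eq_empty_or_nonempty with rfl | hTne
    · simp
    by_contra hcon
    push_neg at hcon
    set N := T.biUnion nbr with hN
    set U := T ∪ N with hU
    have hNk : N.card ≤ kk n * T.card := le_of_lt hcon
    have hUcard₁ : U.card ≤ 2 * kk n * T.card := by
      calc U.card ≤ T.card + N.card := Finset.card_union_le _ _
        _ ≤ T.card + kk n * T.card := by omega
        _ ≤ 2 * kk n * T.card := by nlinarith [hkk1]
    have hUcardR : (U.card:ℝ) ≤ Umax n := by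
      rw [Umax]
      have h1 : (U.card:ℝ) ≤ 2 * kk n * T.card := by exact_mod_cast hUcard₁
      have h2 : (T.card:ℝ) ≤ S.card := by exact_mod_cast Finset.card_le_card hT
      have h3 : (0:ℝ) < kk n := by exact_mod_cast hkk1
      calc (U.card:ℝ) ≤ 2 * kk n * T.card := h1
        _ ≤ 2 * kk n * ((n:ℝ) / (Real.log n)^(0.9:ℝ)) := by nlinarith [h2.trans hS]
        _ = 2 * kk n * n / (Real.log n)^(0.9:ℝ) := by ring
    -- count edges inside U
    have hXge : (T.card : ℝ) * Dd n ≤ (X ω U : ℝ) := by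
      -- edges of E' leaving T
      have hcount : ((E'.filter (fun e => e.1 ∈ T)).card : ℝ) = ∑ s ∈ T, ((E'.filter (fun e => e.1 = s)).card : ℝ) := by
        have h := Finset.card_eq_sum_card_fiberwise
          (f := Prod.fst) (s := E'.filter (fun e => e.1 ∈ T)) (t := T)
          (fun e he => (Finset.mem_filter.1 he).2)
        have heq : ∀ s ∈ T, ((E'.filter (fun e => e.1 ∈ T)).filter (fun e => e.1 = s)) = E'.filter (fun e => e.1 = s) := by
          intro s hs
          ext e
          simp only [Finset.mem_filter, and_assoc]
          constructor
          · rintro ⟨h1, _, h3⟩; exact ⟨h1, h3⟩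
          · rintro ⟨h1, h3⟩; exact ⟨h1, h3 ▸ hs, h3⟩
        push_cast [h]
        exact Finset.sum_congr rfl (fun s hs => by rw [heq s hs])
      have hsum : (T.card : ℝ) * Dd n ≤ ∑ s ∈ T, ((E'.filter (fun e => e.1 = s)).card : ℝ) := by
        calc (T.card : ℝ) * Dd n = ∑ _s ∈ T, Dd n := by
              rw [Finset.sum_const, nsmul_eq_mul]
          _ ≤ ∑ s ∈ T, ((E'.filter (fun e => e.1 = s)).card : ℝ) :=
              Finset.sum_le_sum (fun s hs => hdeg s (hT hs))
      have hinj : ((E'.filter (fun e => e.1 ∈ T)).card : ℕ) ≤ X ω U := by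
        rw [X]
        apply Finset.card_le_card_of_injOn (fun e => ({e.1, e.2} : Finset (Fin n)))
        · intro e he
          rw [Finset.mem_coe, Finset.mem_filter] at he
          obtain ⟨heE, heT⟩ := he
          obtain ⟨heS, heW, hadj⟩ := hE' e heE
          rw [Finset.mem_coe, Finset.mem_filter]
          constructor
          · rw [Finset.mem_powersetCard]
            refine ⟨?_, Finset.card_pair (uadj_ne hadj)⟩
            intro x hx
            rw [Finset.mem_insert, Finset.mem_singleton] at hx
            rcases hx with rfl | rfl
            · exact Finset.mem_union_left _ heT
            · refine Finset.mem_union_right _ ?_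
              rw [hN]
              apply Finset.mem_biUnion.2 ⟨e.1, heT, ?_⟩
              rw [hnbr]
              exact Finset.mem_image.2 ⟨e, Finset.mem_filter.2 ⟨heE, rfl⟩, rfl⟩
          · exact uadj_edgeTrue hadj
        · intro e he f hf hef
          rw [Finset.coe_filter] at he hf
          obtain ⟨heE, heT⟩ := he
          obtain ⟨hfE, hfT⟩ := hf
          obtain ⟨heS, heW, -⟩ := hE' e heE
          obtain ⟨hfS, hfW, -⟩ := hE' f hfE
          have hef' : ({e.1, e.2} : Finset (Fin n)) = {f.1, f.2} := hef
          have h1 : e.1 = f.1 := by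
            have h1e : e.1 ∈ ({f.1, f.2} : Finset (Fin n)) := by
              rw [← hef']; exact Finset.mem_insert_self _ _
            rcases Finset.mem_insert.1 h1e with h | h
            · exact h
            · rw [Finset.mem_singleton] at h
              exact absurd (h ▸ heS) (Finset.disjoint_left.1 hSW ((h ▸ heS : f.2 ∈ S) : f.2 ∈ S) hfW |>.elim)
          have h2 : e.2 = f.2 := by
            have h2e : e.2 ∈ ({f.1, f.2} : Finset (Fin n)) := by
              rw [← hef']; exact Finset.mem_insert_of_mem (Finset.mem_singleton_self _)
            rcases Finset.mem_insert.1 h2e with h | h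
            · exact absurd hfS (fun hc => Finset.disjoint_left.1 hSW (h ▸ hc) heW)
            · exact Finset.mem_singleton.1 h
          exact Prod.ext h1 h2
      calc (T.card : ℝ) * Dd n ≤ ∑ s ∈ T, ((E'.filter (fun e => e.1 = s)).card : ℝ) := hsum
        _ = ((E'.filter (fun e => e.1 ∈ T)).card : ℝ) := hcount.symm
        _ ≤ (X ω U : ℝ) := by exact_mod_cast hinj
    -- apply Qev
    have hUne : U.Nonempty := hTne.mono (Finset.subset_union_left)
    have hQU := hQ U hUne hUcardR
    have haX : aa n U.card ≤ X ω U := by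
      rw [aa, Nat.ceil_le]
      have hk0 : (0:ℝ) < 2 * kk n := by
        have : (0:ℝ) < kk n := by exact_mod_cast hkk1
        linarith
      rw [div_le_iff₀ hk0]
      have h1 : (U.card:ℝ) ≤ 2 * kk n * T.card := by exact_mod_cast hUcard₁
      calc Dd n * U.card ≤ Dd n * (2 * kk n * T.card) := by nlinarith
        _ = (T.card * Dd n) * (2 * kk n) := by ring
        _ ≤ (X ω U : ℝ) * (2 * kk n) := by nlinarith [hXge]
    omega
  -- Hall's theorem
  set ι := {x : Fin n × Fin (kk n) // x.1 ∈ S} with hι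
  have hallCond : ∀ A : Finset ι, A.card ≤ (A.biUnion (fun x => nbr x.1.1)).card := by
    intro A
    set T := A.image (fun x : ι => x.1.1) with hT
    have hTS : T ⊆ S := by
      intro s hs
      obtain ⟨x, _, rfl⟩ := Finset.mem_image.1 hs
      exact x.2
    have hA1 : A.card ≤ kk n * T.card := by
      have hsub : A.image (fun x : ι => x.1) ⊆ T ×ˢ (Finset.univ : Finset (Fin (kk n))) := by
        intro y hy
        obtain ⟨x, hx, rfl⟩ := Finset.mem_image.1 hy
        exact Finset.mem_product.2 ⟨Finset.mem_image.2 ⟨x, hx, rfl⟩, Finset.mem_univ _⟩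
      have hinj : A.card = (A.image (fun x : ι => x.1)).card :=
        (Finset.card_image_of_injective A Subtype.val_injective).symm
      calc A.card = (A.image (fun x : ι => x.1)).card := hinj
        _ ≤ (T ×ˢ (Finset.univ : Finset (Fin (kk n)))).card := Finset.card_le_card hsub
        _ = T.card * kk n := by rw [Finset.card_product, Finset.card_univ, Fintype.card_fin]
        _ = kk n * T.card := Nat.mul_comm _ _
    have hA2 : A.biUnion (fun x => nbr x.1.1) = T.biUnion nbr := by
      ext y
      simp only [Finset.mem_biUnion, hT, Finset.mem_image]
      constructor
      · rintro ⟨x, hx, hy⟩; exact ⟨x.1.1, ⟨x, hx, rfl⟩, hy⟩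
      · rintro ⟨s, ⟨x, hx, rfl⟩, hy⟩; exact ⟨x, hx, hy⟩
    rw [hA2]
    exact hA1.trans (hHall T hTS)
  obtain ⟨f, hfinj, hf⟩ := (Finset.all_card_le_biUnion_card_iff_exists_injective
    (fun x : ι => nbr x.1.1)).1 hallCond
  set g : ι → Fin n × Fin n := fun x => (x.1.1, f x) with hg
  have hginj : Function.Injective g := by
    intro x y hxy
    have : f x = f y := congrArg Prod.snd hxy
    exact hfinj this
  refine ⟨Finset.univ.image g, ?_, ?_, ?_⟩
  · intro e he
    obtain ⟨x, _, rfl⟩ := Finset.mem_image.1 he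
    have := hf x
    rw [hnbr] at this
    obtain ⟨e', he', hee⟩ := Finset.mem_image.1 this
    rw [Finset.mem_filter] at he'
    have : g x = e' := Prod.ext (he'.2.symm) (hee.symm)
    rw [this]
    exact he'.1
  · intro s hs
    have heq : (Finset.univ.image g).filter (fun e => e.1 = s)
        = (Finset.univ.filter (fun x : ι => (g x).1 = s)).image g := Finset.filter_image
    rw [heq, Finset.card_image_of_injective _ hginj]
    have : (Finset.univ.filter (fun x : ι => (g x).1 = s)).card = (Finset.univ : Finset (Fin (kk n))).card := by
      apply Finset.card_bij (fun x _ => x.1.2)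
      · intro a _; exact Finset.mem_univ _
      · intro a ha b hb hab
        rw [Finset.mem_filter] at ha hb
        have ha1 : (a : Fin n × Fin (kk n)).1 = s := ha.2
        have hb1 : (b : Fin n × Fin (kk n)).1 = s := hb.2
        apply Subtype.ext
        apply Prod.ext (ha1.trans hb1.symm) hab
      · intro i _
        refine ⟨⟨(s, i), hs⟩, ?_, rfl⟩
        rw [Finset.mem_filter]
        exact ⟨Finset.mem_univ _, rfl⟩
    rw [this, Finset.card_univ, Fintype.card_fin]
    rfl
  · intro w
    rw [Finset.card_le_one]
    intro e₁ h₁ e₂ h₂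
    rw [Finset.mem_filter] at h₁ h₂
    obtain ⟨x, _, rfl⟩ := Finset.mem_image.1 h₁.1
    obtain ⟨y, _, rfl⟩ := Finset.mem_image.1 h₂.1
    have : f x = f y := by
      have e1 : (g x).2 = w := h₁.2
      have e2 : (g y).2 = w := h₂.2
      exact e1.trans e2.symm
    rw [hfinj this]


lemma cyl_prob {n : ℕ} (P : ℝ≥0∞) (A : Finset (HEdge n 2)) :
    uHyper n 2 P {ω | ∀ e ∈ A, ω e = true} = (min P 1) ^ A.card := by
  have h1 : {ω : USample n 2 | ∀ e ∈ A, ω e = true}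
      = Set.pi Set.univ (fun e => if e ∈ A then {true} else Set.univ) := by
    ext ω
    simp only [Set.mem_setOf_eq, Set.mem_pi, Set.mem_univ, forall_true_left]
    constructor
    · intro h e; split <;> simp_all
    · intro h e he; have := h e; simp [he] at this; exact this
  rw [h1, uHyper, Measure.pi_pi]
  have h2 : ∀ e : HEdge n 2, (PMF.bernoulli (min P 1).toNNReal
      (by simpa using ENNReal.toNNReal_mono ENNReal.one_ne_top (min_le_right P 1))).toMeasure
      (if e ∈ A then ({true} : Set Bool) else Set.univ) = if e ∈ A then (min P 1) else 1 := by
    intro e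
    split
    · rw [PMF.toMeasure_apply_singleton _ _ (measurableSet_singleton _)]
      exact (PMF.bernoulli_apply ..).trans (ENNReal.coe_toNNReal (ne_top_of_le_ne_top ENNReal.one_ne_top (min_le_right P 1)))
    · exact measure_univ
  simp only [h2]
  rw [Finset.prod_ite_mem Finset.univ A (fun _ => min P 1)]
  simp [Finset.univ_inter]

lemma cylF_prob {n : ℕ} (P : ℝ≥0∞) (A : Finset (Finset (Fin n)))
    (hA : ∀ e ∈ A, e.card = 2) :
    uHyper n 2 P {ω | ∀ e ∈ A, edgeTrue ω e = true} = (min P 1) ^ A.card := by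
  classical
  set A' : Finset (HEdge n 2) := A.subtype (fun e => e.card = 2) with hA'
  have hset : {ω : USample n 2 | ∀ e ∈ A, edgeTrue ω e = true}
      = {ω | ∀ e ∈ A', ω e = true} := by
    ext ω
    simp only [Set.mem_setOf_eq]
    constructor
    · intro h e' he'
      rw [hA', Finset.mem_subtype] at he'
      have := h e'.1 he'
      rw [edgeTrue, dif_pos e'.2] at this
      convert this
    · intro h e he
      have h2 := hA e he
      rw [edgeTrue, dif_pos h2]
      exact h ⟨e, h2⟩ (by rw [hA', Finset.mem_subtype]; exact he)
  have hcard : A'.card = A.card := by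
    rw [hA', Finset.card_subtype, Finset.filter_true_of_mem hA]
  rw [hset, cyl_prob, hcard]

lemma qev_bad_subset (n : ℕ) :
    {ω : USample n 2 | ¬ Qev n ω} ⊆
      ⋃ U ∈ (Finset.univ : Finset (Finset (Fin n))).filter
          (fun U => U.Nonempty ∧ (U.card:ℝ) ≤ Umax n),
        ⋃ A ∈ (U.powersetCard 2).powersetCard (aa n U.card),
          {ω | ∀ e ∈ A, edgeTrue ω e = true} := by
  classical
  intro ω hω
  rw [Set.mem_setOf_eq, Qev] at hω
  push_neg at hω
  obtain ⟨U, hUne, hUcard, hX⟩ := hω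
  have hXa : aa n U.card ≤ X ω U := not_lt.1 (by exact fun h => absurd h (not_lt.2 hX))
  rw [X] at hXa
  obtain ⟨A, hAsub, hAcard⟩ := Finset.exists_subset_card_eq hXa
  refine Set.mem_biUnion (Finset.mem_filter.2 ⟨Finset.mem_univ _, hUne, hUcard⟩) ?_
  refine Set.mem_biUnion (Finset.mem_powersetCard.2
    ⟨hAsub.trans (Finset.filter_subset _ _), hAcard⟩) ?_
  intro e he
  exact (Finset.mem_filter.1 (hAsub he)).2

lemma prob_bad_le_sum (n : ℕ) (P : ℝ≥0∞) :
    uHyper n 2 P {ω | ¬ Qev n ω} ≤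
      ∑ U ∈ (Finset.univ : Finset (Finset (Fin n))).filter
          (fun U => U.Nonempty ∧ (U.card:ℝ) ≤ Umax n),
        ((U.card.choose 2).choose (aa n U.card) : ℝ≥0∞) * (min P 1)^(aa n U.card) := by
  classical
  refine (measure_mono (qev_bad_subset n)).trans ?_
  refine (measure_biUnion_finset_le _ _).trans ?_
  apply Finset.sum_le_sum
  intro U hU
  refine (measure_biUnion_finset_le _ _).trans ?_
  have hterm : ∀ A ∈ (U.powersetCard 2).powersetCard (aa n U.card),
      uHyper n 2 P {ω | ∀ e ∈ A, edgeTrue ω e = true} = (min P 1)^(aa n U.card) := by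
    intro A hA
    rw [Finset.mem_powersetCard] at hA
    rw [cylF_prob P A (fun e he => (Finset.mem_powersetCard.1 (hA.1 he)).2), hA.2]
  rw [Finset.sum_congr rfl hterm, Finset.sum_const, Finset.card_powersetCard,
    Finset.card_powersetCard, nsmul_eq_mul]

lemma sum_bound (n : ℕ) (hBig : Big n) (pp : ℝ) (hp0 : 0 ≤ pp)
    (hp2 : pp ≤ 2*Real.log n/n) (hn : 0 < (n:ℝ)) :
    (∑ U ∈ (Finset.univ : Finset (Finset (Fin n))).filter
        (fun U => U.Nonempty ∧ (U.card:ℝ) ≤ Umax n),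
      ((U.card.choose 2).choose (aa n U.card) : ℝ≥0∞) * (min (ENNReal.ofReal pp) 1)^(aa n U.card))
    ≤ ENNReal.ofReal (2/Real.log n) := by
  classical
  obtain ⟨hL2, hLL14, hb3, hb4⟩ := hBig
  have hL1 : 1 ≤ Real.log n := by linarith
  set q : ℝ≥0∞ := min (ENNReal.ofReal pp) 1 with hq
  set g : ℕ → ℝ≥0∞ := fun u => ((u.choose 2).choose (aa n u) : ℝ≥0∞) * q^(aa n u) with hg
  set 𝒰 := (Finset.univ : Finset (Finset (Fin n))).filter
      (fun U => U.Nonempty ∧ (U.card:ℝ) ≤ Umax n) with h𝒰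
  have hmaps : ∀ U ∈ 𝒰, U.card ∈ Finset.range (n+1) := by
    intro U _
    rw [Finset.mem_range]
    have := Finset.card_le_univ U
    simp only [Finset.card_univ, Fintype.card_fin] at this
    omega
  have hfib := Finset.sum_fiberwise_of_maps_to hmaps (fun U => g U.card)
  rw [← hfib]
  have hperu : ∀ u ∈ Finset.range (n+1),
      (∑ U ∈ 𝒰.filter (fun U => U.card = u), g U.card)
        ≤ ENNReal.ofReal (if u = 0 then (0:ℝ) else (1/Real.log n)^u) := by
    intro u _
    rcases Finset.eq_empty_or_nonempty (𝒰.filter (fun U => U.card = u)) with hemp | ⟨U₀, hU₀⟩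
    · rw [hemp, Finset.sum_empty]
      exact zero_le
    rw [Finset.mem_filter, h𝒰, Finset.mem_filter] at hU₀
    obtain ⟨⟨-, hU₀ne, hU₀card⟩, hU₀u⟩ := hU₀
    have hu1 : 1 ≤ u := by
      rw [← hU₀u]
      exact Finset.card_pos.2 hU₀ne
    rw [if_neg (by omega)]
    have hsum_eq : (∑ U ∈ 𝒰.filter (fun U => U.card = u), g U.card)
        = ((𝒰.filter (fun U => U.card = u)).card : ℝ≥0∞) * g u := by
      rw [Finset.sum_congr rfl (fun U hU => by
        rw [(Finset.mem_filter.1 hU).2]), Finset.sum_const, nsmul_eq_mul]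
    rw [hsum_eq]
    have hfibcard : (𝒰.filter (fun U => U.card = u)).card ≤ n.choose u := by
      have hsub : 𝒰.filter (fun U => U.card = u) ⊆ Finset.univ.powersetCard u := by
        intro U hU
        rw [Finset.mem_powersetCard_univ]
        exact (Finset.mem_filter.1 hU).2
      calc (𝒰.filter (fun U => U.card = u)).card ≤ (Finset.univ.powersetCard u).card :=
            Finset.card_le_card hsub
        _ = n.choose u := by rw [Finset.card_powersetCard, Finset.card_univ, Fintype.card_fin]
    have hqbound : q^(aa n u) ≤ ENNReal.ofReal (pp^(aa n u)) := by
      rw [ENNReal.ofReal_pow hp0]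
      exact pow_le_pow_left' (min_le_left _ _) _
    have hcore : (n.choose u:ℝ) * ((Nat.choose (u.choose 2) (aa n u):ℝ) * pp^(aa n u)) ≤ (1/Real.log n)^u := by
      apply core n u (aa n u) (Real.log n) (Real.log (Real.log n)) (kk n) pp hL1 rfl hLL14 hb3 hb4
      · exact_mod_cast kk_ge_one hL1
      · exact kk_le hL1
      · exact hn
      · exact hu1
      · rw [← hU₀u]
        calc ((U₀.card):ℝ) ≤ Umax n := hU₀card
          _ = 2*(kk n)*n/(Real.log n)^(0.9:ℝ) := by rw [Umax]
      · rw [aa, Dd]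
        exact Nat.le_ceil _
      · exact hp0
      · exact hp2
    calc ((𝒰.filter (fun U => U.card = u)).card : ℝ≥0∞) * g u
        ≤ (n.choose u : ℝ≥0∞) * g u := by
          apply mul_le_mul_left
          exact_mod_cast hfibcard
      _ ≤ (n.choose u : ℝ≥0∞) * (((u.choose 2).choose (aa n u) : ℝ≥0∞) * ENNReal.ofReal (pp^(aa n u))) := by
          rw [hg]
          apply mul_le_mul_right
          exact mul_le_mul_right hqbound _
      _ = ENNReal.ofReal ((n.choose u:ℝ) * ((Nat.choose (u.choose 2) (aa n u):ℝ) * pp^(aa n u))) := by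
          rw [ENNReal.ofReal_mul (by positivity), ENNReal.ofReal_mul (by positivity)]
          simp [ENNReal.ofReal_natCast]
      _ ≤ ENNReal.ofReal ((1/Real.log n)^u) := ENNReal.ofReal_le_ofReal hcore
  calc (∑ u ∈ Finset.range (n+1), ∑ U ∈ 𝒰.filter (fun U => U.card = u), g U.card)
      ≤ ∑ u ∈ Finset.range (n+1), ENNReal.ofReal (if u = 0 then (0:ℝ) else (1/Real.log n)^u) :=
        Finset.sum_le_sum hperu
    _ = ENNReal.ofReal (∑ u ∈ Finset.range (n+1), if u = 0 then (0:ℝ) else (1/Real.log n)^u) := by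
        rw [ENNReal.ofReal_sum_of_nonneg]
        intro i _
        split
        · exact le_refl 0
        · positivity
    _ ≤ ENNReal.ofReal (2 * (1/Real.log n)) := by
        apply ENNReal.ofReal_le_ofReal
        apply geom_aux
        · positivity
        · rw [mul_one_div, div_le_one (by linarith)]; linarith
    _ = ENNReal.ofReal (2/Real.log n) := by rw [mul_one_div]

/-- Hall-type matching lemma in `G(n,p)`. -/
theorem whp_large_star_matching
    (p : ℕ → ℝ) (hplo : ∀ n : ℕ, Real.log n / n ≤ p n)
    (hphi : ∀ n : ℕ, p n ≤ 2 * Real.log n / n)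
    (γ : ℕ → ℝ) (hγ0 : ∀ n, 0 < γ n) (hγ1 : ∀ n, γ n < 1)
    (hγ : Tendsto γ atTop (nhds 0)) :
    Tendsto (fun n : ℕ => uHyper n 2 (ENNReal.ofReal (p n))
      {ω | ∀ S W : Finset (Fin n), Disjoint S W →
        (S.card : ℝ) ≤ (n : ℝ) / Real.log n ^ (0.9 : ℝ) →
        (1 - γ n) * n / Real.log (Real.log n) ≤ (W.card : ℝ) →
        (W.card : ℝ) ≤ (1 + γ n) * n / Real.log (Real.log n) →
        ∀ E' : Finset (Fin n × Fin n),
        (∀ e ∈ E', e.1 ∈ S ∧ e.2 ∈ W ∧ uadj ω e.1 e.2) →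
        (∀ s ∈ S, Real.log n / (Real.log (Real.log n)) ^ 2 ≤
          ((E'.filter fun e => e.1 = s).card : ℝ)) →
        ∃ M ⊆ E',
          (∀ s ∈ S, (M.filter fun e => e.1 = s).card = ⌈Real.log n ^ (0.2 : ℝ)⌉₊) ∧
          (∀ w : Fin n, (M.filter fun e => e.2 = w).card ≤ 1)})
      atTop (nhds 1) := by
  have hL : Tendsto (fun n : ℕ => Real.log n) atTop atTop :=
    Real.tendsto_log_atTop.comp tendsto_natCast_atTop_atTop
  have hof : Tendsto (fun n : ℕ => ENNReal.ofReal (2/Real.log n)) atTop (nhds 0) := by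
    have h1 : Tendsto (fun n : ℕ => 2/Real.log n) atTop (nhds 0) :=
      tendsto_const_nhds.div_atTop hL
    have h2 := ENNReal.tendsto_ofReal h1
    simpa using h2
  have hg : Tendsto (fun n : ℕ => 1 - ENNReal.ofReal (2/Real.log n)) atTop (nhds 1) := by
    have := ENNReal.Tendsto.sub (tendsto_const_nhds (x := (1:ℝ≥0∞))) hof (Or.inl ENNReal.one_ne_top)
    simpa using this
  refine tendsto_of_tendsto_of_tendsto_of_le_of_le' hg tendsto_const_nhds ?_ ?_
  · -- eventual lower bound
    filter_upwards [big_eventually, eventually_ge_atTop 3] with n hBig hn3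
    set P := ENNReal.ofReal (p n) with hP
    haveI : IsProbabilityMeasure (uHyper n 2 P) := by unfold uHyper; infer_instance
    have hn0 : (0:ℝ) < n := by positivity
    have hlogpos : (0:ℝ) ≤ Real.log n := Real.log_natCast_nonneg n
    have hp0 : 0 ≤ p n := le_trans (by positivity) (hplo n)
    have hL1 : 1 ≤ Real.log n := by linarith [hBig.1]
    set A := {ω : USample n 2 | ∀ S W : Finset (Fin n), Disjoint S W →
        (S.card : ℝ) ≤ (n : ℝ) / Real.log n ^ (0.9 : ℝ) →
        (1 - γ n) * n / Real.log (Real.log n) ≤ (W.card : ℝ) →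
        (W.card : ℝ) ≤ (1 + γ n) * n / Real.log (Real.log n) →
        ∀ E' : Finset (Fin n × Fin n),
        (∀ e ∈ E', e.1 ∈ S ∧ e.2 ∈ W ∧ uadj ω e.1 e.2) →
        (∀ s ∈ S, Real.log n / (Real.log (Real.log n)) ^ 2 ≤
          ((E'.filter fun e => e.1 = s).card : ℝ)) →
        ∃ M ⊆ E',
          (∀ s ∈ S, (M.filter fun e => e.1 = s).card = ⌈Real.log n ^ (0.2 : ℝ)⌉₊) ∧
          (∀ w : Fin n, (M.filter fun e => e.2 = w).card ≤ 1)} with hA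
    have hAc : uHyper n 2 P Aᶜ ≤ ENNReal.ofReal (2/Real.log n) := by
      have hsub : Aᶜ ⊆ {ω : USample n 2 | ¬ Qev n ω} := by
        intro ω hω
        simp only [Set.mem_compl_iff, hA, Set.mem_setOf_eq] at hω ⊢
        intro hQ
        apply hω
        intro S W hSW hS _ _ E' hE' hdeg
        exact det hL1 ω hQ S W hSW hS E' hE' hdeg
      calc uHyper n 2 P Aᶜ ≤ uHyper n 2 P {ω : USample n 2 | ¬ Qev n ω} :=
            measure_mono hsub
        _ ≤ _ := prob_bad_le_sum n P
        _ ≤ ENNReal.ofReal (2/Real.log n) := sum_bound n hBig (p n) hp0 (hphi n) hn0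
    have h1 : uHyper n 2 P (Aᶜᶜ) = 1 - uHyper n 2 P (Aᶜ) :=
      prob_compl_eq_one_sub (usample_measurable _)
    rw [compl_compl] at h1
    rw [h1]
    exact tsub_le_tsub_left hAc 1
  · refine Eventually.of_forall (fun n => ?_)
    haveI : IsProbabilityMeasure (uHyper n 2 (ENNReal.ofReal (p n))) := by
      unfold uHyper; infer_instance
    exact prob_le_one

end StarMatchingProof
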